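/- Let Y be a linear threshold unit with n binary inputs and threshold k (1 ≤ k ≤ n), and let v ∈ {0,1}^n be an actual input state with Σ_i v_i ≥ k. Then a nonempty occurrence x = v|S has actual effect {Y = 1} (i.e., α_e(x) > 0) if and only if v_i = 1 for every i ∈ S and |S| ≤ k; every other nonempty occurrence x = v|S (i.e., one with some fixed input in state 0, or one fixing more than k inputs all to 1) is reducible, α_e(x) ≤ 0. -/

import Mathlib

open Finset

/-- Number of inputs in state `1` (true). -/
def ones {n : ℕ} (u : Fin n → Bool) : ℕ := (univ.filter fun i => u i = true).card

/-- Linear threshold unit with threshold `k`: outputs `1` iff at least `k` inputs are `1`. -/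
def LTU {n : ℕ} (k : ℕ) (u : Fin n → Bool) : Bool := decide (k ≤ ones u)

/-- Effect probability `π(y | v|S) = 2^{-(n-|S|)} · #{u : u agrees with v on S ∧ Y u = y}`. -/
noncomputable def effProb {n : ℕ} (Y : (Fin n → Bool) → Bool) (v : Fin n → Bool)
    (S : Finset (Fin n)) (y : Bool) : ℝ :=
  ((univ.filter fun u : Fin n → Bool => (∀ i ∈ S, u i = v i) ∧ Y u = y).card : ℝ) /
    2 ^ (n - S.card)

/-- Irreducible effect ratio of a nonempty occurrence `v|S` on outcome `y`:
`α_e = log₂( π(y | v|S) / max_{T ⊊ S} π(y | v|T) )`. -/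
noncomputable def alphaE {n : ℕ} (Y : (Fin n → Bool) → Bool) (v : Fin n → Bool)
    (S : Finset (Fin n)) (hS : S.Nonempty) (y : Bool) : ℝ :=
  Real.logb 2 (effProb Y v S y /
    S.ssubsets.sup' ⟨∅, Finset.empty_mem_ssubsets hS⟩ (fun T => effProb Y v T y))

section Aux
variable {n : ℕ}

lemma ones_update_true (u : Fin n → Bool) (i : Fin n) (h : u i = false) :
    ones (Function.update u i true) = ones u + 1 := by
  unfold ones
  have he : (univ.filter fun j => Function.update u i true j = true)
      = insert i (univ.filter fun j => u j = true) := by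
    ext j
    by_cases hj : j = i <;> simp [Function.update_apply, hj, h]
  rw [he, card_insert_of_notMem (by simp [h])]

lemma le_ones_of_subset {u : Fin n → Bool} {T : Finset (Fin n)}
    (h : ∀ j ∈ T, u j = true) : T.card ≤ ones u :=
  card_le_card fun j hj => mem_filter.mpr ⟨mem_univ _, h j hj⟩

lemma cyl_card (v : Fin n → Bool) (T : Finset (Fin n)) :
    (univ.filter fun u : Fin n → Bool => ∀ i ∈ T, u i = v i).card = 2 ^ (n - T.card) := by
  induction T using Finset.induction_on with
  | empty => simp [Finset.filter_true_of_mem, card_univ]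
  | @insert i T hi ih =>
    have hsplit := Finset.card_filter_add_card_filter_not
      (s := univ.filter fun u : Fin n → Bool => ∀ j ∈ T, u j = v j)
      (p := fun u => u i = v i)
    rw [filter_filter, filter_filter] at hsplit
    have h1 : (univ.filter fun u : Fin n → Bool => (∀ j ∈ T, u j = v j) ∧ u i = v i)
        = univ.filter fun u : Fin n → Bool => ∀ j ∈ insert i T, u j = v j := by
      apply filter_congr; intro u _
      simp only [forall_mem_insert]; tauto
    rw [h1] at hsplit
    -- bijection between the two parts
    have h2 : (univ.filter fun u : Fin n → Bool => (∀ j ∈ T, u j = v j) ∧ ¬ u i = v i).card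
        = (univ.filter fun u : Fin n → Bool => ∀ j ∈ insert i T, u j = v j).card := by
      refine Finset.card_bij' (fun u _ => Function.update u i (v i))
        (fun u _ => Function.update u i (!v i)) ?_h1 ?_h2 ?_h3 ?_h4
      case _h1 =>
        intro u hu
        simp only [mem_filter, mem_univ, true_and, forall_mem_insert] at hu ⊢
        refine ⟨by simp, fun j hj => ?_⟩
        rw [Function.update_apply, if_neg (by rintro rfl; exact hi hj)]
        exact hu.1 j hj
      case _h2 =>
        intro u hu
        simp only [mem_filter, mem_univ, true_and, forall_mem_insert] at hu ⊢
        refine ⟨fun j hj => ?_, by simp⟩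
        rw [Function.update_apply, if_neg (by rintro rfl; exact hi hj)]
        exact hu.2 j hj
      case _h3 =>
        intro u hu
        simp only [mem_filter, mem_univ, true_and] at hu
        have h5 : (!v i) = u i := by
          cases hvi : v i <;> cases hui : u i <;> simp_all
        show Function.update (Function.update u i (v i)) i (!v i) = u
        rw [Function.update_idem, h5, Function.update_eq_self]
      case _h4 =>
        intro u hu
        simp only [mem_filter, mem_univ, true_and, forall_mem_insert] at hu
        show Function.update (Function.update u i (!v i)) i (v i) = u
        rw [Function.update_idem, ← hu.1, Function.update_eq_self]
    rw [h2, ih] at hsplit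
    have hcard : (insert i T).card = T.card + 1 := card_insert_of_notMem hi
    have hle : T.card + 1 ≤ n := by
      have h := card_le_univ (insert i T)
      simpa [hcard, card_univ] using h
    have hpow : 2 ^ (n - T.card) = 2 ^ (n - (T.card + 1)) * 2 := by
      have he2 : n - T.card = (n - (T.card + 1)) + 1 := by
        clear hsplit h1 h2 ih hcard
        omega
      rw [he2, pow_succ]
    rw [hcard]
    clear h1 h2 ih
    have hs2 : (univ.filter fun u : Fin n → Bool => ∀ j ∈ insert i T, u j = v j).card +
        (univ.filter fun u : Fin n → Bool => ∀ j ∈ insert i T, u j = v j).card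
        = 2 ^ (n - T.card) := hsplit
    clear hsplit
    apply Nat.eq_of_mul_eq_mul_right (show 0 < 2 by norm_num)
    rw [mul_two, mul_two, hs2, hpow]
    exact mul_two _
end Aux

section Aux2
variable {n : ℕ}

def agreeSet (k : ℕ) (v : Fin n → Bool) (T : Finset (Fin n)) : Finset (Fin n → Bool) :=
  univ.filter fun u => (∀ i ∈ T, u i = v i) ∧ LTU k u = true

lemma mem_agreeSet {k : ℕ} {v u : Fin n → Bool} {T : Finset (Fin n)} :
    u ∈ agreeSet k v T ↔ (∀ i ∈ T, u i = v i) ∧ k ≤ ones u := by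
  simp [agreeSet, LTU]

def negSet (k : ℕ) (v : Fin n → Bool) (T : Finset (Fin n)) (i : Fin n) :
    Finset (Fin n → Bool) :=
  univ.filter fun u => ((∀ j ∈ T, u j = v j) ∧ k ≤ ones u) ∧ ¬ u i = v i

lemma mem_negSet {k : ℕ} {v u : Fin n → Bool} {T : Finset (Fin n)} {i : Fin n} :
    u ∈ negSet k v T i ↔ ((∀ j ∈ T, u j = v j) ∧ k ≤ ones u) ∧ ¬ u i = v i := by
  simp [negSet]

lemma agreeSet_split {k : ℕ} {v : Fin n → Bool} {T : Finset (Fin n)} {i : Fin n}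
    (hi : i ∉ T) :
    (agreeSet k v T).card = (agreeSet k v (insert i T)).card + (negSet k v T i).card := by
  have hsplit := Finset.card_filter_add_card_filter_not
    (s := agreeSet k v T) (p := fun u => u i = v i)
  have h1 : filter (fun u => u i = v i) (agreeSet k v T) = agreeSet k v (insert i T) := by
    unfold agreeSet; rw [filter_filter]; apply filter_congr; intro u _
    simp only [forall_mem_insert]; tauto
  have h2 : filter (fun u => ¬ u i = v i) (agreeSet k v T) = negSet k v T i := by
    unfold agreeSet negSet; rw [filter_filter]; apply filter_congr; intro u _
    simp only [LTU, decide_eq_true_eq]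
  rw [h1, h2] at hsplit
  exact hsplit.symm

lemma update_injOn_false {i : Fin n} {s : Finset (Fin n → Bool)}
    (h : ∀ u ∈ s, u i = false) :
    Set.InjOn (fun u => Function.update u i true) (s : Set (Fin n → Bool)) := by
  intro a ha b hb hab
  funext j
  by_cases hj : j = i
  · subst hj; rw [h a ha, h b hb]
  · have := congrFun hab j
    simpa [Function.update_apply, hj] using this

lemma neg_lt_agree {k : ℕ} {v : Fin n → Bool} {T : Finset (Fin n)} {i : Fin n}
    (hi : i ∉ T) (hkn : k ≤ n)
    (hall : ∀ j ∈ insert i T, v j = true) (hck : (insert i T).card ≤ k) :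
    (negSet k v T i).card < (agreeSet k v (insert i T)).card := by
  have hvi : v i = true := hall i (mem_insert_self i T)
  have hfalse : ∀ u ∈ negSet k v T i, u i = false := by
    intro u hu
    rw [mem_negSet] at hu
    cases h : u i
    · rfl
    · exact absurd (h.trans hvi.symm) hu.2
  have hmaps : ∀ u ∈ negSet k v T i, Function.update u i true ∈ agreeSet k v (insert i T) := by
    intro u hu
    have hui := hfalse u hu
    rw [mem_negSet] at hu
    rw [mem_agreeSet]
    refine ⟨fun j hj => ?_, ?_⟩
    · rcases mem_insert.mp hj with rfl | hjT
      · simp [hvi]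
      · rw [Function.update_apply, if_neg (by rintro rfl; exact hi hjT)]
        exact hu.1.1 j hjT
    · rw [ones_update_true u i hui]
      exact le_trans hu.1.2 (Nat.le_succ _)
  obtain ⟨W, hWsub, hWcard⟩ := Finset.exists_superset_card_eq (s := insert i T) hck
    (by simpa using hkn)
  have hou0 : ones (fun j => decide (j ∈ W)) = k := by
    rw [← hWcard]; unfold ones; congr 1; ext j; simp
  have hu0mem : (fun j => decide (j ∈ W)) ∈ agreeSet k v (insert i T) := by
    rw [mem_agreeSet]
    exact ⟨fun j hj => by simp [hWsub hj, hall j hj], le_of_eq hou0.symm⟩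
  have hu0not : (fun j => decide (j ∈ W)) ∉ (negSet k v T i).image
      (fun u => Function.update u i true) := by
    intro hmem
    obtain ⟨u, hu, hfu⟩ := mem_image.mp hmem
    have hones : ones (Function.update u i true) = ones u + 1 :=
      ones_update_true u i (hfalse u hu)
    rw [hfu, hou0] at hones
    rw [mem_negSet] at hu
    omega
  have himg : (negSet k v T i).image (fun u => Function.update u i true)
      ⊂ agreeSet k v (insert i T) := by
    rw [Finset.ssubset_iff_of_subset]
    · exact ⟨_, hu0mem, hu0not⟩
    · intro x hx
      obtain ⟨u, hu, rfl⟩ := mem_image.mp hx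
      exact hmaps u hu
  calc (negSet k v T i).card
      = ((negSet k v T i).image (fun u => Function.update u i true)).card :=
        (Finset.card_image_of_injOn (update_injOn_false hfalse)).symm
    _ < _ := Finset.card_lt_card himg

lemma agree_le_neg {k : ℕ} {v : Fin n → Bool} {T : Finset (Fin n)} {i : Fin n}
    (hi : i ∉ T) (hvi : v i = false) :
    (agreeSet k v (insert i T)).card ≤ (negSet k v T i).card := by
  have hfalse : ∀ u ∈ agreeSet k v (insert i T), u i = false := by
    intro u hu
    rw [mem_agreeSet] at hu
    rw [hu.1 i (mem_insert_self i T), hvi]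
  apply Finset.card_le_card_of_injOn (fun u => Function.update u i true)
  · intro u hu
    have hui := hfalse u hu
    rw [Finset.mem_coe, mem_agreeSet] at hu
    simp only [Finset.mem_coe, mem_negSet]
    refine ⟨⟨fun j hj => ?_, ?_⟩, by simp [hvi]⟩
    · rw [Function.update_apply, if_neg (by rintro rfl; exact hi hj)]
      exact hu.1 j (mem_insert_of_mem hj)
    · rw [ones_update_true u i hui]
      exact le_trans hu.2 (Nat.le_succ _)
  · exact update_injOn_false hfalse

lemma agreeSet_card_le {k : ℕ} {v : Fin n → Bool} {T : Finset (Fin n)} :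
    (agreeSet k v T).card ≤ 2 ^ (n - T.card) := by
  rw [← cyl_card v T]
  apply card_le_card
  intro u hu
  rw [mem_agreeSet] at hu
  exact mem_filter.mpr ⟨mem_univ _, hu.1⟩

lemma agreeSet_card_full {k : ℕ} {v : Fin n → Bool} {T : Finset (Fin n)}
    (hall : ∀ j ∈ T, v j = true) (hk : k ≤ T.card) :
    (agreeSet k v T).card = 2 ^ (n - T.card) := by
  rw [← cyl_card v T]
  congr 1
  unfold agreeSet
  apply filter_congr
  intro u _
  simp only [LTU, decide_eq_true_eq, and_iff_left_iff_imp]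
  intro hagree
  exact le_trans hk (le_ones_of_subset fun j hj => (hagree j hj).trans (hall j hj))

lemma agreeSet_card_pos {k : ℕ} {v : Fin n → Bool} {T : Finset (Fin n)}
    (hv : k ≤ ones v) : 0 < (agreeSet k v T).card := by
  rw [card_pos]
  exact ⟨v, mem_agreeSet.mpr ⟨fun _ _ => rfl, hv⟩⟩

end Aux2


section Aux3
variable {n k : ℕ} {v : Fin n → Bool}

lemma effProb_eq (k : ℕ) (v : Fin n → Bool) (T : Finset (Fin n)) :
    effProb (LTU k) v T true = ((agreeSet k v T).card : ℝ) / 2 ^ (n - T.card) := rfl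

lemma effProb_pos (hv : k ≤ ones v) (T : Finset (Fin n)) :
    0 < effProb (LTU k) v T true := by
  rw [effProb_eq]
  apply div_pos _ (by positivity)
  exact_mod_cast agreeSet_card_pos hv

lemma effProb_le_one (T : Finset (Fin n)) : effProb (LTU k) v T true ≤ 1 := by
  rw [effProb_eq]
  rw [div_le_one (by positivity)]
  exact_mod_cast agreeSet_card_le

lemma effProb_eq_one {T : Finset (Fin n)} (hall : ∀ j ∈ T, v j = true)
    (hk : k ≤ T.card) : effProb (LTU k) v T true = 1 := by
  rw [effProb_eq, agreeSet_card_full hall hk]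
  push_cast
  apply div_self
  positivity

lemma card_succ_le {T : Finset (Fin n)} {i : Fin n} (hi : i ∉ T) : T.card + 1 ≤ n := by
  have h := card_le_univ (insert i T)
  simpa [card_insert_of_notMem hi, card_univ] using h

lemma pow_split {T : Finset (Fin n)} {i : Fin n} (hi : i ∉ T) :
    (2:ℝ) ^ (n - T.card) = 2 ^ (n - (T.card + 1)) * 2 := by
  have h := card_succ_le hi
  have he : n - T.card = (n - (T.card + 1)) + 1 := by omega
  rw [he, pow_succ]

lemma effProb_step_lt {T : Finset (Fin n)} {i : Fin n} (hi : i ∉ T) (hkn : k ≤ n)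
    (hall : ∀ j ∈ insert i T, v j = true) (hck : (insert i T).card ≤ k) :
    effProb (LTU k) v T true < effProb (LTU k) v (insert i T) true := by
  have hsplit := agreeSet_split (k := k) (v := v) hi
  have hlt := neg_lt_agree hi hkn hall hck
  have hkey : ((agreeSet k v T).card : ℝ) < 2 * (agreeSet k v (insert i T)).card := by
    have : (agreeSet k v T).card < 2 * (agreeSet k v (insert i T)).card := by omega
    exact_mod_cast this
  have hD : (0:ℝ) < 2 ^ (n - (T.card + 1)) := by positivity
  calc effProb (LTU k) v T true
      = ((agreeSet k v T).card : ℝ) / (2 ^ (n - (T.card + 1)) * 2) := by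
        rw [effProb_eq, pow_split hi]
    _ < (2 * (agreeSet k v (insert i T)).card : ℝ) / (2 ^ (n - (T.card + 1)) * 2) := by
        gcongr
    _ = ((agreeSet k v (insert i T)).card : ℝ) / 2 ^ (n - (T.card + 1)) := by
        rw [mul_comm (2:ℝ) _, mul_div_mul_right _ _ (two_ne_zero)]
    _ = effProb (LTU k) v (insert i T) true := by
        rw [effProb_eq, card_insert_of_notMem hi]

lemma effProb_step_le {T : Finset (Fin n)} {i : Fin n} (hi : i ∉ T) (hvi : v i = false) :
    effProb (LTU k) v (insert i T) true ≤ effProb (LTU k) v T true := by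
  have hsplit := agreeSet_split (k := k) (v := v) hi
  have hle := agree_le_neg (k := k) hi hvi
  have hkey : (2 * (agreeSet k v (insert i T)).card : ℝ) ≤ (agreeSet k v T).card := by
    have : 2 * (agreeSet k v (insert i T)).card ≤ (agreeSet k v T).card := by omega
    exact_mod_cast this
  have hD : (0:ℝ) < 2 ^ (n - (T.card + 1)) := by positivity
  calc effProb (LTU k) v (insert i T) true
      = ((agreeSet k v (insert i T)).card : ℝ) / 2 ^ (n - (T.card + 1)) := by
        rw [effProb_eq, card_insert_of_notMem hi]
    _ = (2 * (agreeSet k v (insert i T)).card : ℝ) / (2 ^ (n - (T.card + 1)) * 2) := by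
        rw [mul_comm (2:ℝ) _, mul_div_mul_right _ _ (two_ne_zero)]
    _ ≤ ((agreeSet k v T).card : ℝ) / (2 ^ (n - (T.card + 1)) * 2) := by
        gcongr
    _ = effProb (LTU k) v T true := by rw [effProb_eq, pow_split hi]

end Aux3

section Aux4
variable {n k : ℕ} {v : Fin n → Bool}

lemma effProb_chain (hkn : k ≤ n) {S : Finset (Fin n)}
    (hall : ∀ j ∈ S, v j = true) (hSk : S.card ≤ k) :
    ∀ m (T : Finset (Fin n)), T ⊆ S → S.card ≤ T.card + m → T ⊂ S →
      effProb (LTU k) v T true < effProb (LTU k) v S true := by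
  intro m
  induction m with
  | zero =>
    intro T hsub hcard hss
    exact absurd (Finset.eq_of_subset_of_card_le hsub (by omega)) hss.ne
  | succ m ih =>
    intro T hsub hcard hss
    obtain ⟨i, hiS, hiT⟩ := Finset.exists_of_ssubset hss
    have hsub' : insert i T ⊆ S := insert_subset hiS hsub
    have hstep : effProb (LTU k) v T true < effProb (LTU k) v (insert i T) true := by
      apply effProb_step_lt hiT hkn
      · intro j hj; exact hall j (hsub' hj)
      · exact le_trans (card_le_card hsub') hSk
    by_cases heq : insert i T = S
    · rw [heq] at hstep; exact hstep
    · have hss' : insert i T ⊂ S := lt_of_le_of_ne hsub' heq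
      refine lt_trans hstep (ih _ hsub' ?_ hss')
      have hc := card_insert_of_notMem hiT
      omega

end Aux4

/-- For an LTU with `Σ v_i ≥ k`, a nonempty occurrence `v|S` has actual effect `{Y = 1}`
(`α_e > 0`) iff all inputs fixed by `S` are in state `1` and `|S| ≤ k`; every other nonempty
occurrence is reducible (`α_e ≤ 0`). -/
theorem ltu_actual_effects_of_on_state (n k : ℕ) (hk1 : 1 ≤ k) (hkn : k ≤ n)
    (v : Fin n → Bool) (hv : k ≤ ones v) (S : Finset (Fin n)) (hS : S.Nonempty) :
    (0 < alphaE (LTU k) v S hS true ↔ (∀ i ∈ S, v i = true) ∧ S.card ≤ k) ∧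
    (¬ ((∀ i ∈ S, v i = true) ∧ S.card ≤ k) → alphaE (LTU k) v S hS true ≤ 0) := by
  have hmain : 0 < alphaE (LTU k) v S hS true ↔ (∀ i ∈ S, v i = true) ∧ S.card ≤ k := by
    have hDpos : 0 < S.ssubsets.sup' ⟨∅, Finset.empty_mem_ssubsets hS⟩
        (fun T => effProb (LTU k) v T true) :=
      lt_of_lt_of_le (effProb_pos hv ∅) (Finset.le_sup' (f := fun T => effProb (LTU k) v T true) (Finset.empty_mem_ssubsets hS))
    rw [alphaE, Real.logb_pos_iff (by norm_num) (div_pos (effProb_pos hv S) hDpos),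
        one_lt_div hDpos]
    erw [Finset.sup'_lt_iff]
    constructor
    · intro h
      by_cases hall : ∀ i ∈ S, v i = true
      · refine ⟨hall, ?_⟩
        by_contra hk2
        push_neg at hk2
        obtain ⟨T, hTsub, hTcard⟩ := Finset.exists_subset_card_eq (le_of_lt hk2)
        have hss : T ⊂ S := lt_of_le_of_ne hTsub (by intro he; rw [he] at hTcard; omega)
        have h1 : effProb (LTU k) v T true = 1 :=
          effProb_eq_one (fun j hj => hall j (hTsub hj)) (le_of_eq hTcard.symm)
        have h2 := effProb_le_one (k := k) (v := v) S
        have h3 := h T (mem_ssubsets.mpr hss)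
        linarith
      · exfalso
        push_neg at hall
        obtain ⟨i, hiS, hvi⟩ := hall
        have hvi' : v i = false := by cases h' : v i <;> simp_all
        have hstep : effProb (LTU k) v S true ≤ effProb (LTU k) v (S.erase i) true := by
          have h4 := effProb_step_le (k := k) (T := S.erase i) (i := i) (Finset.notMem_erase i S) hvi'
          rwa [Finset.insert_erase hiS] at h4
        have h5 := h (S.erase i) (mem_ssubsets.mpr (Finset.erase_ssubset hiS))
        linarith
    · rintro ⟨hall, hSk⟩ T hT
      have hss := mem_ssubsets.mp hT
      have hcle := card_le_card hss.subset
      exact effProb_chain hkn hall hSk (S.card - T.card) T hss.subset (by omega) hss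
  exact ⟨hmain, fun h => le_of_not_gt fun h' => h (hmain.mp h')⟩
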